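/- Let f : ℝ² → ℝ be defined by f(x) = √(log ‖x‖) if ‖x‖ ≥ 1 and f(x) = 0 otherwise. Then for any x, y ∈ ℝ² with x ≠ 0, f(x+y) − f(x) ≤ 1 + ‖y‖/‖x‖. -/
import Mathlib

lemma sqrt_le_one_add' (t : ℝ) (ht : 0 ≤ t) : Real.sqrt t ≤ 1 + t := by
  nlinarith [Real.sq_sqrt ht, Real.sqrt_nonneg t]

lemma sqrt_sub_aux (A B t : ℝ) (hA : 0 ≤ A) (hB : 0 ≤ B) (ht : 0 ≤ t)
    (h : A - B ≤ t) : Real.sqrt A - Real.sqrt B ≤ 1 + t := by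
  have h1 : Real.sqrt A ≤ Real.sqrt (B + t) := Real.sqrt_le_sqrt (by linarith)
  have h2 : Real.sqrt (B + t) ≤ Real.sqrt B + Real.sqrt t := by
    have hsq : B + t ≤ (Real.sqrt B + Real.sqrt t) ^ 2 := by
      nlinarith [Real.sq_sqrt hB, Real.sq_sqrt ht, Real.sqrt_nonneg B, Real.sqrt_nonneg t]
    calc Real.sqrt (B + t) ≤ Real.sqrt ((Real.sqrt B + Real.sqrt t) ^ 2) :=
          Real.sqrt_le_sqrt hsq
      _ = Real.sqrt B + Real.sqrt t := Real.sqrt_sq (by positivity)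
  have h3 : Real.sqrt t ≤ 1 + t := sqrt_le_one_add' t ht
  linarith

theorem stmt1 (f : EuclideanSpace ℝ (Fin 2) → ℝ)
    (hf : ∀ x, f x = if 1 ≤ ‖x‖ then Real.sqrt (Real.log ‖x‖) else 0) :
    ∀ x y : EuclideanSpace ℝ (Fin 2), x ≠ 0 →
      f (x + y) - f x ≤ 1 + ‖y‖ / ‖x‖ := by
  intro x y hx
  have hx0 : 0 < ‖x‖ := norm_pos_iff.mpr hx
  have ht : 0 ≤ ‖y‖ / ‖x‖ := by positivity
  have hn : ‖x + y‖ ≤ ‖x‖ + ‖y‖ := norm_add_le x y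
  rw [hf, hf]
  split_ifs with h1 h2
  · -- 1 ≤ ‖x+y‖, 1 ≤ ‖x‖
    apply sqrt_sub_aux _ _ _ (Real.log_nonneg h1) (Real.log_nonneg h2) ht
    have hxy0 : 0 < ‖x + y‖ := lt_of_lt_of_le one_pos h1
    have hdiv : Real.log ‖x + y‖ - Real.log ‖x‖ = Real.log (‖x + y‖ / ‖x‖) :=
      (Real.log_div hxy0.ne' hx0.ne').symm
    have hlog : Real.log (‖x + y‖ / ‖x‖) ≤ ‖x + y‖ / ‖x‖ - 1 :=
      Real.log_le_sub_one_of_pos (div_pos hxy0 hx0)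
    have hq : ‖x + y‖ / ‖x‖ ≤ 1 + ‖y‖ / ‖x‖ := by
      rw [div_le_iff₀ hx0, add_mul, one_mul, div_mul_cancel₀ _ hx0.ne']
      linarith
    linarith
  · -- 1 ≤ ‖x+y‖, ‖x‖ < 1
    push_neg at h2
    have hyx : ‖y‖ ≤ ‖y‖ / ‖x‖ := by
      rw [le_div_iff₀ hx0]
      nlinarith [norm_nonneg y]
    have hlog : Real.log ‖x + y‖ ≤ ‖y‖ / ‖x‖ := by
      have := Real.log_le_sub_one_of_pos (lt_of_lt_of_le one_pos h1)
      linarith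
    have := sqrt_sub_aux (Real.log ‖x + y‖) 0 (‖y‖ / ‖x‖)
      (Real.log_nonneg h1) le_rfl ht (by linarith)
    simpa using this
  · -- ‖x+y‖ < 1, 1 ≤ ‖x‖
    have := Real.sqrt_nonneg (Real.log ‖x‖)
    linarith
  · linarith
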